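/- Let G be a finite group, g ∈ G, and π an irreducible complex representation of G with character χ_π. Then (χ_π(g)/dim π) · [G : Z_G(g)] is an algebraic integer, where Z_G(g) is the centralizer of g in G. -/

import Mathlib

open CategoryTheory

theorem char_mul_index_div_dim_isIntegral (G : Type) [Group G] [Fintype G]
    (V : FDRep ℂ G) [Simple V] (g : G) :
    IsIntegral ℤ
      (V.character g / (Module.finrank ℂ V : ℂ) * ((Subgroup.centralizer {g}).index : ℂ)) := by
  classical
  -- the conjugacy class of `g` as a finset
  set S : Finset G := (Set.toFinite (MulAction.orbit (ConjAct G) g)).toFinset with hS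
  have hSmem : ∀ h, h ∈ S ↔ h ∈ MulAction.orbit (ConjAct G) g := by
    intro h; rw [hS, Set.Finite.mem_toFinset]
  have hindex : (Subgroup.centralizer {g}).index = S.card := by
    rw [show (Subgroup.centralizer {g}).index = (MulAction.stabilizer (ConjAct G) g).index from by
        rw [Subgroup.centralizer_eq_comap_stabilizer]
        exact Subgroup.index_comap_of_surjective _ ConjAct.toConjAct.surjective,
      MulAction.index_stabilizer, Set.ncard_eq_toFinset_card']
    congr 1
    ext h
    simp only [Set.mem_toFinset, hSmem]
  -- the class sum operator
  set T : Module.End ℂ V := ∑ h ∈ S, V.ρ h with hT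
  -- T commutes with the action
  have hcomm : ∀ x : G, (V.ρ x) * T = T * (V.ρ x) := by
    intro x
    rw [hT, Finset.mul_sum, Finset.sum_mul]
    refine Finset.sum_nbij' (fun h => x * h * x⁻¹) (fun h => x⁻¹ * h * x) ?_ ?_ ?_ ?_ ?_
    · intro h hh
      rw [hSmem] at hh ⊢
      have := MulAction.mem_orbit h (ConjAct.toConjAct x)
      rw [MulAction.orbit_eq_iff.mpr hh, ConjAct.toConjAct_smul] at this
      exact this
    · intro h hh
      rw [hSmem] at hh ⊢
      have := MulAction.mem_orbit h (ConjAct.toConjAct x⁻¹)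
      rw [MulAction.orbit_eq_iff.mpr hh, ConjAct.toConjAct_smul] at this
      simpa using this
    · intro h _; group
    · intro h _; group
    · intro h _
      rw [← map_mul, ← map_mul]
      congr 1
      group
  -- T as a morphism in FDRep
  set τ : V ⟶ V := ⟨InducedCategory.homMk (ModuleCat.ofHom T), fun x => by
    ext v
    exact LinearMap.congr_fun (hcomm x).symm v⟩ with hτ
  obtain ⟨c, hc⟩ := endomorphism_simple_eq_smul_id (C := FDRep ℂ G) ℂ τ
  have hThom : T = c • LinearMap.id := by
    have := congrArg (fun f : V ⟶ V => f.hom.hom.hom) hc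
    exact this.symm
  -- trace computation
  have htrace : (S.card : ℂ) * V.character g = c * (Module.finrank ℂ V : ℂ) := by
    have h1 : LinearMap.trace ℂ V T = ∑ h ∈ S, V.character h := by
      rw [hT, map_sum]; rfl
    have h2 : ∀ h ∈ S, V.character h = V.character g := by
      intro h hh
      rw [hSmem] at hh
      obtain ⟨x, rfl⟩ := hh
      show V.character (x • g) = V.character g
      rw [ConjAct.smul_def, FDRep.char_conj]
    rw [Finset.sum_congr rfl h2, Finset.sum_const, nsmul_eq_mul] at h1
    have h3 : LinearMap.trace ℂ V T = c * (Module.finrank ℂ V : ℂ) := by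
      rw [hThom, map_smul, LinearMap.trace_id, smul_eq_mul]
    rw [← h1, h3]
  -- nontriviality
  have hV : Nontrivial V := by
    by_contra h
    rw [not_nontrivial_iff_subsingleton] at h
    refine id_nonzero V ?_
    apply Action.hom_ext
    ext v
    exact h.elim _ _
  have hdim : (Module.finrank ℂ V : ℂ) ≠ 0 := by
    exact_mod_cast Module.finrank_pos.ne'
  -- the value equals c
  have hval : V.character g / (Module.finrank ℂ V : ℂ) * ((Subgroup.centralizer {g}).index : ℂ)
      = c := by
    rw [hindex]
    field_simp
    rw [mul_comm (V.character g), htrace]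
    ring
  rw [hval]
  -- integrality of c via the group ring
  haveI : Module.Finite ℤ (MonoidAlgebra ℤ G) :=
    Module.Finite.of_basis (MonoidAlgebra.basis G ℤ)
  set z : MonoidAlgebra ℤ G := ∑ h ∈ S, MonoidAlgebra.single h (1 : ℤ) with hz
  have hzint : IsIntegral ℤ z := IsIntegral.of_finite ℤ z
  set φ : MonoidAlgebra ℤ G →ₐ[ℤ] Module.End ℂ V :=
    MonoidAlgebra.lift ℤ (Module.End ℂ V) G V.ρ with hφ
  have hφz : φ z = T := by
    rw [hz, hT, map_sum]
    refine Finset.sum_congr rfl fun h _ => ?_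
    simp [hφ, MonoidAlgebra.lift_single]
  have hTint : IsIntegral ℤ T := hφz ▸ hzint.map φ
  have hTalg : T = algebraMap ℂ (Module.End ℂ V) c := by
    rw [hThom, Module.algebraMap_end_eq_smul_id]
  haveI : Nontrivial (Module.End ℂ V) := by
    refine ⟨1, 0, fun h => ?_⟩
    obtain ⟨v, hv⟩ := exists_ne (0 : V)
    exact hv (by simpa using LinearMap.congr_fun h v)
  have hinj : Function.Injective
      (((Algebra.ofId ℂ (Module.End ℂ V)).restrictScalars ℤ : ℂ →ₐ[ℤ] Module.End ℂ V)) :=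
    RingHom.injective (algebraMap ℂ (Module.End ℂ V))
  exact (isIntegral_algHom_iff _ hinj).mp (by rwa [hTalg] at hTint)
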